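/- For any ζ > 0 and any real γ > 1, the function φ(x) = ln(1 + x^γ) satisfies φ'(ζ) = γ / (ζ + ζ^{1-γ}) ≤ (γ - 1)^{(γ-1)/γ}. -/

import Mathlib

open Real

/-- For any `ζ > 0` and real `γ > 1`, the function `φ(x) = ln(1 + x^γ)` has
`φ'(ζ) = γ / (ζ + ζ^(1-γ))`, and this value is at most `(γ-1)^((γ-1)/γ)`. -/
theorem stmt0 (γ : ℝ) (hγ : 1 < γ) (ζ : ℝ) (hζ : 0 < ζ) :
    deriv (fun x : ℝ => Real.log (1 + x ^ γ)) ζ = γ / (ζ + ζ ^ (1 - γ)) ∧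
    γ / (ζ + ζ ^ (1 - γ)) ≤ (γ - 1) ^ ((γ - 1) / γ) := by
  have hγ0 : (0:ℝ) < γ := by linarith
  have hγ1 : (0:ℝ) < γ - 1 := by linarith
  have hζγ : (0:ℝ) < ζ ^ γ := rpow_pos_of_pos hζ γ
  have hζ1γ : (0:ℝ) < ζ ^ (1 - γ) := rpow_pos_of_pos hζ _
  have hden : (0:ℝ) < ζ + ζ ^ (1 - γ) := by positivity
  have hkey2 : ζ ^ (γ - 1) * ζ ^ (1 - γ) = 1 := by
    rw [← rpow_add hζ]; norm_num
  have h4 : ζ ^ (γ - 1) * ζ = ζ ^ γ := by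
    rw [← Real.rpow_add_one hζ.ne', sub_add_cancel]
  constructor
  · have h1 : HasDerivAt (fun x : ℝ => x ^ γ) (γ * ζ ^ (γ - 1)) ζ :=
      Real.hasDerivAt_rpow_const (Or.inl hζ.ne')
    have h2 : HasDerivAt (fun x : ℝ => 1 + x ^ γ) (γ * ζ ^ (γ - 1)) ζ :=
      h1.const_add 1
    have h3 : HasDerivAt (fun x : ℝ => Real.log (1 + x ^ γ))
        ((γ * ζ ^ (γ - 1)) / (1 + ζ ^ γ)) ζ := h2.log (by positivity)
    rw [h3.deriv, div_eq_div_iff (by positivity : (0:ℝ) < 1 + ζ ^ γ).ne' hden.ne']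
    linear_combination γ * h4 + γ * hkey2
  · have hw : (γ - 1) / γ + 1 / γ = 1 := by field_simp; ring
    have gm := Real.geom_mean_le_arith_mean2_weighted
      (by positivity : (0:ℝ) ≤ (γ-1)/γ) (by positivity : (0:ℝ) ≤ 1/γ)
      (by positivity : (0:ℝ) ≤ ζ * γ / (γ - 1)) (by positivity : (0:ℝ) ≤ γ * ζ ^ (1 - γ)) hw
    have hr1 : (γ-1)/γ * (ζ * γ / (γ - 1)) = ζ := by field_simp
    have hr2 : 1/γ * (γ * ζ ^ (1 - γ)) = ζ ^ (1 - γ) := by field_simp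
    have hprod : (ζ * γ / (γ - 1)) ^ ((γ-1)/γ) * (γ * ζ ^ (1 - γ)) ^ (1/γ)
        = γ / (γ - 1) ^ ((γ-1)/γ) := by
      rw [div_rpow (by positivity) hγ1.le, mul_rpow hζ.le hγ0.le,
        mul_rpow hγ0.le hζ1γ.le]
      rw [← Real.rpow_mul hζ.le]
      have hζsum : ζ ^ ((γ-1)/γ) * ζ ^ ((1-γ) * (1/γ)) = 1 := by
        rw [← rpow_add hζ, show (γ-1)/γ + (1-γ) * (1/γ) = 0 by ring, rpow_zero]
      have hγsum : γ ^ ((γ-1)/γ) * γ ^ (1/γ) = γ := by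
        rw [← rpow_add hγ0, hw, rpow_one]
      calc ζ ^ ((γ-1)/γ) * γ ^ ((γ-1)/γ) / (γ - 1) ^ ((γ-1)/γ) *
            (γ ^ (1/γ) * ζ ^ ((1-γ) * (1/γ)))
          = (ζ ^ ((γ-1)/γ) * ζ ^ ((1-γ) * (1/γ))) * (γ ^ ((γ-1)/γ) * γ ^ (1/γ))
              / (γ - 1) ^ ((γ-1)/γ) := by ring
        _ = γ / (γ - 1) ^ ((γ-1)/γ) := by rw [hζsum, hγsum, one_mul]
    rw [hr1, hr2, hprod] at gm
    have hpow : (0:ℝ) < (γ - 1) ^ ((γ-1)/γ) := rpow_pos_of_pos hγ1 _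
    rw [div_le_iff₀ hden]
    rw [div_le_iff₀ hpow] at gm
    calc γ ≤ (ζ + ζ ^ (1-γ)) * (γ - 1) ^ ((γ-1)/γ) := gm
      _ = (γ - 1) ^ ((γ-1)/γ) * (ζ + ζ ^ (1-γ)) := by ring
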